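/- For every ε > 0 there exist a strongly quasisymmetric homeomorphism f of ℝ fixing 0 and 1 with 0 < ‖log f′‖_* < ε, a sequence (ℓ_n) of strongly quasisymmetric homeomorphisms of ℝ fixing 0 and 1 with ‖log ℓ_n′‖_* → 0 as n → ∞, and a constant c > 0 such that ‖log (f∘ℓ_n^{-1})′ − log f′‖_* ≥ c for all n. Consequently, the group of strongly quasisymmetric homeomorphisms, topologized via f ↦ log f′ with the BMO seminorm, is not a topological group. -/

import Mathlib

open MeasureTheory Set Filter Topology
open scoped ENNReal NNReal

noncomputable section

/-- The average of `u` over the interval from `a` to `b`. -/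
noncomputable def intervalAvg {E : Type*} [NormedAddCommGroup E] [NormedSpace ℝ E]
    (u : ℝ → E) (a b : ℝ) : E :=
  (b - a)⁻¹ • ∫ x in a..b, u x

/-- The BMO seminorm `‖u‖_* = sup_I (1/|I|) ∫_I ‖u - u_I‖`, valued in `ℝ≥0∞`. -/
noncomputable def bmoSeminorm {E : Type*} [NormedAddCommGroup E] [NormedSpace ℝ E]
    (u : ℝ → E) : ℝ≥0∞ :=
  ⨆ (a : ℝ) (b : ℝ) (_ : a < b),
    ENNReal.ofReal ((b - a)⁻¹ * ∫ x in a..b, ‖u x - intervalAvg u a b‖)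

/-- `u` is a BMO function: locally integrable with finite BMO seminorm. -/
def IsBMO {E : Type*} [NormedAddCommGroup E] [NormedSpace ℝ E] (u : ℝ → E) : Prop :=
  LocallyIntegrable u volume ∧ bmoSeminorm u < ⊤

/-- `ω` is an `A_p`-weight of Muckenhoupt on `ℝ` (`p > 1`). -/
def IsApWeight (ω : ℝ → ℝ) (p : ℝ) : Prop :=
  (∀ x, 0 ≤ ω x) ∧ LocallyIntegrable ω volume ∧
    LocallyIntegrable (fun x => (1 / ω x) ^ (1 / (p - 1))) volume ∧
    ∃ C : ℝ, 1 ≤ C ∧ ∀ a b : ℝ, a < b →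
      ((b - a)⁻¹ * ∫ x in a..b, ω x) *
        ((b - a)⁻¹ * ∫ x in a..b, (1 / ω x) ^ (1 / (p - 1))) ^ (p - 1) ≤ C

/-- `ω` is an `A_∞`-weight: an `A_p`-weight for some `p > 1`. -/
def IsAInftyWeight (ω : ℝ → ℝ) : Prop :=
  ∃ p : ℝ, 1 < p ∧ IsApWeight ω p

/-- `ω` is an `A_1`-weight of Muckenhoupt on `ℝ`. -/
def IsA1Weight (ω : ℝ → ℝ) : Prop :=
  (∀ x, 0 ≤ ω x) ∧ LocallyIntegrable ω volume ∧
    ∃ C : ℝ, 1 ≤ C ∧ ∀ a b : ℝ, a < b →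
      (b - a)⁻¹ * ∫ x in a..b, ω x ≤ C * essInf ω (volume.restrict (Set.Ioo a b))

/-- `f` is locally absolutely continuous with derivative `f'`. -/
def IsLocAC {E : Type*} [NormedAddCommGroup E] [NormedSpace ℝ E] (f f' : ℝ → E) : Prop :=
  LocallyIntegrable f' volume ∧ ∀ a b : ℝ, a < b → f b - f a = ∫ t in a..b, f' t

/-- `f` is a strongly quasisymmetric homeomorphism of `ℝ` with derivative `f'`:
an increasing homeomorphism of `ℝ` onto itself, locally absolutely continuous,
whose derivative is an `A_∞`-weight. -/
def IsSQSWith (f f' : ℝ → ℝ) : Prop :=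
  StrictMono f ∧ Function.Surjective f ∧ IsLocAC f f' ∧ IsAInftyWeight f'

/-- `f` is a strongly quasisymmetric homeomorphism of `ℝ` onto itself. -/
def IsSQS (f : ℝ → ℝ) : Prop :=
  ∃ f', IsSQSWith f f'

/-- `γ_u(x) = ∫_0^x e^{u(t)} dt`. -/
noncomputable def gammaOf (u : ℝ → ℝ) (x : ℝ) : ℝ :=
  ∫ t in (0:ℝ)..x, Real.exp (u t)

end

/-! ### Auxiliary material: explicit piecewise-linear strongly quasisymmetric maps -/

noncomputable section SQSHelpers

/-- The "ramp" function: clamp `x` into `[A, B]` and subtract `A`. -/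
def ramp (A B x : ℝ) : ℝ := min (max x A) B - A

lemma ramp_of_le {A B x : ℝ} (hAB : A ≤ B) (h : x ≤ A) : ramp A B x = 0 := by
  simp [ramp, max_eq_right h, min_eq_left hAB]

lemma ramp_of_mem {A B x : ℝ} (hA : A ≤ x) (hB : x ≤ B) : ramp A B x = x - A := by
  simp [ramp, max_eq_left hA, min_eq_left hB]

lemma ramp_of_ge {A B x : ℝ} (hAB : A ≤ B) (h : B ≤ x) : ramp A B x = B - A := by
  simp [ramp, max_eq_left (hAB.trans h), min_eq_right h]

lemma ramp_mono (A B : ℝ) : Monotone (ramp A B) := fun _ _ h =>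
  sub_le_sub_right (min_le_min (max_le_max h le_rfl) le_rfl) A

lemma ramp_decomp {P M Q : ℝ} (hPM : P ≤ M) (hMQ : M ≤ Q) (x : ℝ) :
    x = min x P + ramp P M x + ramp M Q x + (max x Q - Q) := by
  simp only [ramp, min_def, max_def]
  split_ifs <;> linarith

/-- Piecewise linear map with breakpoints `P < M < Q`, slopes `s₁` on `[P,M]`,
`s₂` on `[M,Q]`, and slope `1` outside. -/
def PL (P M Q s₁ s₂ x : ℝ) : ℝ := x + (s₁ - 1) * ramp P M x + (s₂ - 1) * ramp M Q x

/-- The derivative of `PL`. -/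
def PL' (P M Q s₁ s₂ x : ℝ) : ℝ :=
  1 + (s₁ - 1) * Set.indicator (Set.Ioc P M) (fun _ => (1:ℝ)) x
    + (s₂ - 1) * Set.indicator (Set.Ioc M Q) (fun _ => (1:ℝ)) x

lemma PL_eq {P M Q s₁ s₂ : ℝ} (hPM : P ≤ M) (hMQ : M ≤ Q) (x : ℝ) :
    PL P M Q s₁ s₂ x
      = min x P + s₁ * ramp P M x + s₂ * ramp M Q x + (max x Q - Q) := by
  have := ramp_decomp hPM hMQ x
  unfold PL
  linarith [this]

lemma PL_strictMono {P M Q s₁ s₂ : ℝ} (hPM : P < M) (hMQ : M < Q)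
    (hs₁ : 0 < s₁) (hs₂ : 0 < s₂) : StrictMono (PL P M Q s₁ s₂) := by
  intro x y hxy
  set m : ℝ := min 1 (min s₁ s₂) with hm
  have hm0 : 0 < m := by positivity
  have hm1 : m ≤ 1 := min_le_left _ _
  have hms₁ : m ≤ s₁ := le_trans (min_le_right _ _) (min_le_left _ _)
  have hms₂ : m ≤ s₂ := le_trans (min_le_right _ _) (min_le_right _ _)
  have d0 : min x P ≤ min y P := min_le_min hxy.le le_rfl
  have d1 : ramp P M x ≤ ramp P M y := ramp_mono P M hxy.le
  have d2 : ramp M Q x ≤ ramp M Q y := ramp_mono M Q hxy.le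
  have d3 : max x Q ≤ max y Q := max_le_max hxy.le le_rfl
  have hx := ramp_decomp hPM.le hMQ.le x
  have hy := ramp_decomp hPM.le hMQ.le y
  rw [PL_eq hPM.le hMQ.le x, PL_eq hPM.le hMQ.le y]
  nlinarith [mul_le_mul_of_nonneg_right hms₁ (sub_nonneg.2 d1),
    mul_le_mul_of_nonneg_right hms₂ (sub_nonneg.2 d2),
    mul_le_mul_of_nonneg_right hm1 (sub_nonneg.2 d0),
    mul_le_mul_of_nonneg_right hm1 (sub_nonneg.2 d3),
    mul_pos hm0 (sub_pos.2 hxy)]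

lemma PL_left {P M Q s₁ s₂ x : ℝ} (hPM : P ≤ M) (hMQ : M ≤ Q) (h : x ≤ P) :
    PL P M Q s₁ s₂ x = x := by
  unfold PL
  rw [ramp_of_le hPM h, ramp_of_le hMQ (h.trans hPM)]
  ring

lemma PL_right {P M Q s₁ s₂ x : ℝ} (hPM : P ≤ M) (hMQ : M ≤ Q) (h : Q ≤ x) :
    PL P M Q s₁ s₂ x = x + ((s₁ - 1) * (M - P) + (s₂ - 1) * (Q - M)) := by
  unfold PL
  rw [ramp_of_ge hPM (hMQ.trans h), ramp_of_ge hMQ h]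
  ring

lemma PL_continuous (P M Q s₁ s₂ : ℝ) : Continuous (PL P M Q s₁ s₂) := by
  unfold PL ramp
  continuity

lemma PL_surjective {P M Q s₁ s₂ : ℝ} (hPM : P ≤ M) (hMQ : M ≤ Q) :
    Function.Surjective (PL P M Q s₁ s₂) := by
  apply (PL_continuous P M Q s₁ s₂).surjective
  · apply Tendsto.congr' _ (tendsto_atTop_add_const_right atTop
      ((s₁ - 1) * (M - P) + (s₂ - 1) * (Q - M)) tendsto_id)
    filter_upwards [eventually_ge_atTop Q] with x hx
    exact (PL_right hPM hMQ hx).symm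
  · apply Tendsto.congr' _ tendsto_id
    filter_upwards [eventually_le_atBot P] with x hx
    exact (PL_left hPM hMQ hx).symm

lemma intInt_of_bounded {f : ℝ → ℝ} (hf : Measurable f) {C : ℝ} (hC : ∀ x, |f x| ≤ C)
    (a b : ℝ) : IntervalIntegrable f volume a b := by
  apply IntervalIntegrable.mono_fun' (g := fun _ => C) intervalIntegrable_const
    hf.aestronglyMeasurable
  exact ae_of_all _ (fun x => by simpa using hC x)

lemma locInt_of_bounded {f : ℝ → ℝ} (hf : Measurable f) {C : ℝ} (hC : ∀ x, |f x| ≤ C) :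
    LocallyIntegrable f volume := by
  rw [locallyIntegrable_iff]
  intro K hK
  exact Integrable.mono' (integrableOn_const hK.measure_lt_top.ne)
    hf.aestronglyMeasurable (ae_of_all _ hC)

lemma integral_indicator_Ioc {A B : ℝ} (a b : ℝ) (hab : a ≤ b) (hAB : A ≤ B) :
    ∫ x in a..b, Set.indicator (Set.Ioc A B) (fun _ => (1:ℝ)) x
      = (min (max b A) B - A) - (min (max a A) B - A) := by
  rw [intervalIntegral.integral_of_le hab,
    MeasureTheory.setIntegral_indicator measurableSet_Ioc]
  rw [setIntegral_const, Set.Ioc_inter_Ioc, Real.volume_real_Ioc, smul_eq_mul, mul_one]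
  simp only [min_def, max_def]
  split_ifs <;> linarith

lemma PL'_measurable (P M Q s₁ s₂ : ℝ) : Measurable (PL' P M Q s₁ s₂) := by
  unfold PL'
  exact (measurable_const.add ((measurable_const.indicator measurableSet_Ioc).const_mul _)).add
    ((measurable_const.indicator measurableSet_Ioc).const_mul _)

lemma indicator_abs_le (A B : ℝ) (x : ℝ) :
    |Set.indicator (Set.Ioc A B) (fun _ => (1:ℝ)) x| ≤ 1 := by
  by_cases h : x ∈ Set.Ioc A B <;> simp [h]

lemma PL'_cases {P M Q s₁ s₂ : ℝ} (hPM : P < M) (x : ℝ) :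
    PL' P M Q s₁ s₂ x = 1 ∨ PL' P M Q s₁ s₂ x = s₁ ∨ PL' P M Q s₁ s₂ x = s₂ := by
  by_cases h1 : x ∈ Set.Ioc P M
  · have h2 : x ∉ Set.Ioc M Q := fun h => absurd h.1 (not_lt.2 h1.2)
    right; left; simp [PL', Set.indicator_of_mem h1, Set.indicator_of_notMem h2]
  · by_cases h2 : x ∈ Set.Ioc M Q
    · right; right
      simp [PL', Set.indicator_of_mem h2, Set.indicator_of_notMem h1]
    · left; simp [PL', Set.indicator_of_notMem h1, Set.indicator_of_notMem h2]

lemma PL'_abs_le {P M Q s₁ s₂ : ℝ} (hPM : P < M) (x : ℝ) :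
    |PL' P M Q s₁ s₂ x| ≤ 1 + |s₁| + |s₂| := by
  rcases PL'_cases (s₁ := s₁) (s₂ := s₂) (Q := Q) hPM x with h | h | h <;> rw [h]
  · rw [abs_one]; linarith [abs_nonneg s₁, abs_nonneg s₂]
  · linarith [abs_nonneg s₂, le_abs_self s₁]
  · linarith [abs_nonneg s₁, le_abs_self s₂]

lemma PL'_intervalIntegrable {P M Q s₁ s₂ : ℝ} (hPM : P < M) (a b : ℝ) :
    IntervalIntegrable (PL' P M Q s₁ s₂) volume a b :=
  intInt_of_bounded (PL'_measurable P M Q s₁ s₂) (PL'_abs_le hPM) a b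

lemma PL_FTC {P M Q s₁ s₂ : ℝ} (hPM : P < M) (hMQ : M < Q) (a b : ℝ) (hab : a ≤ b) :
    PL P M Q s₁ s₂ b - PL P M Q s₁ s₂ a = ∫ t in a..b, PL' P M Q s₁ s₂ t := by
  have i1 : IntervalIntegrable
      (fun x => Set.indicator (Set.Ioc P M) (fun _ => (1:ℝ)) x) volume a b :=
    intInt_of_bounded (measurable_const.indicator measurableSet_Ioc)
      (indicator_abs_le P M) a b
  have i2 : IntervalIntegrable
      (fun x => Set.indicator (Set.Ioc M Q) (fun _ => (1:ℝ)) x) volume a b :=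
    intInt_of_bounded (measurable_const.indicator measurableSet_Ioc)
      (indicator_abs_le M Q) a b
  have hrw : ∫ t in a..b, PL' P M Q s₁ s₂ t
      = ∫ t in a..b, ((1:ℝ) + ((s₁ - 1) * Set.indicator (Set.Ioc P M) (fun _ => (1:ℝ)) t
          + (s₂ - 1) * Set.indicator (Set.Ioc M Q) (fun _ => (1:ℝ)) t)) := by
    apply intervalIntegral.integral_congr
    intro x _
    unfold PL'; ring
  rw [hrw, intervalIntegral.integral_add intervalIntegrable_const
      ((i1.const_mul _).add (i2.const_mul _)),
    intervalIntegral.integral_add (i1.const_mul _) (i2.const_mul _),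
    intervalIntegral.integral_const_mul, intervalIntegral.integral_const_mul,
    integral_indicator_Ioc a b hab hPM.le, integral_indicator_Ioc a b hab hMQ.le,
    intervalIntegral.integral_const]
  unfold PL ramp
  rw [smul_eq_mul]
  ring

lemma isAInfty_of_bounds {ω : ℝ → ℝ} (hmeas : Measurable ω) {m K : ℝ}
    (hm : 0 < m) (hm1 : m ≤ 1) (h1K : 1 ≤ K) (hb : ∀ x, ω x ∈ Set.Icc m K) :
    IsAInftyWeight ω := by
  have hKpos : (0:ℝ) < K := lt_of_lt_of_le one_pos h1K
  have habs : ∀ x, |ω x| ≤ K := fun x =>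
    abs_le.2 ⟨by linarith [(hb x).1], (hb x).2⟩
  have hinvmeas : Measurable fun x => 1 / ω x := measurable_const.div hmeas
  have hinvb : ∀ x, (1 / ω x) ∈ Set.Icc (1/K) (1/m) := fun x =>
    ⟨one_div_le_one_div_of_le (lt_of_lt_of_le hm (hb x).1) (hb x).2,
     one_div_le_one_div_of_le hm (hb x).1⟩
  have hinvabs : ∀ x, |1 / ω x| ≤ 1/m := fun x =>
    abs_le.2 ⟨by linarith [(hinvb x).1, one_div_pos.2 hKpos, one_div_pos.2 hm], (hinvb x).2⟩
  refine ⟨2, one_lt_two, fun x => by linarith [(hb x).1],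
    locInt_of_bounded hmeas habs, ?_, K / m, ?_, ?_⟩
  · simp only [show ((2:ℝ) - 1) = 1 by norm_num, one_div_one, Real.rpow_one]
    exact locInt_of_bounded hinvmeas hinvabs
  · rw [le_div_iff₀ hm]; nlinarith
  · intro a b hab
    simp only [show ((2:ℝ) - 1) = 1 by norm_num, one_div_one, Real.rpow_one]
    have hba : (0:ℝ) < b - a := sub_pos.2 hab
    have hInt : IntervalIntegrable ω volume a b := intInt_of_bounded hmeas habs a b
    have hInt' : IntervalIntegrable (fun x => 1 / ω x) volume a b :=
      intInt_of_bounded hinvmeas hinvabs a b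
    have I1 : ∫ x in a..b, ω x ≤ K * (b - a) := by
      calc ∫ x in a..b, ω x ≤ ∫ _x in a..b, K :=
            intervalIntegral.integral_mono_on hab.le hInt intervalIntegrable_const
              (fun x _ => (hb x).2)
        _ = K * (b - a) := by rw [intervalIntegral.integral_const, smul_eq_mul]; ring
    have I2 : ∫ x in a..b, 1 / ω x ≤ (1/m) * (b - a) := by
      calc ∫ x in a..b, 1 / ω x ≤ ∫ _x in a..b, 1/m :=
            intervalIntegral.integral_mono_on hab.le hInt' intervalIntegrable_const
              (fun x _ => (hinvb x).2)
        _ = (1/m) * (b - a) := by rw [intervalIntegral.integral_const, smul_eq_mul]; ring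
    have A1 : (b - a)⁻¹ * ∫ x in a..b, ω x ≤ K := by
      rw [inv_mul_eq_div, div_le_iff₀ hba]; linarith
    have A2 : (b - a)⁻¹ * ∫ x in a..b, 1 / ω x ≤ 1/m := by
      rw [inv_mul_eq_div, div_le_iff₀ hba]; linarith
    have A2' : 0 ≤ (b - a)⁻¹ * ∫ x in a..b, 1 / ω x := by
      have : 0 ≤ ∫ x in a..b, 1 / ω x :=
        intervalIntegral.integral_nonneg hab.le
          (fun x _ => by linarith [(hinvb x).1, one_div_pos.2 hKpos])
      positivity
    calc ((b - a)⁻¹ * ∫ x in a..b, ω x) * ((b - a)⁻¹ * ∫ x in a..b, 1 / ω x)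
        ≤ K * (1/m) := mul_le_mul A1 A2 A2' hKpos.le
      _ = K / m := by ring

lemma bmo_le_of_bounds {u : ℝ → ℝ} {c₁ c₂ : ℝ} (hmeas : Measurable u)
    (hb : ∀ x, u x ∈ Set.Icc c₁ c₂) :
    bmoSeminorm u ≤ ENNReal.ofReal (c₂ - c₁) := by
  have hc : c₁ ≤ c₂ := (hb 0).1.trans (hb 0).2
  refine iSup_le fun a => iSup_le fun b => iSup_le fun hab => ?_
  apply ENNReal.ofReal_le_ofReal
  have hba : (0:ℝ) < b - a := sub_pos.2 hab
  have habs : ∀ x, |u x| ≤ max |c₁| |c₂| := fun x => abs_le.2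
    ⟨by linarith [(hb x).1, neg_abs_le c₁, le_max_left |c₁| |c₂|],
     by linarith [(hb x).2, le_abs_self c₂, le_max_right |c₁| |c₂|]⟩
  have hint : IntervalIntegrable u volume a b := intInt_of_bounded hmeas habs a b
  set m := intervalAvg u a b with hm
  have him : m ∈ Set.Icc c₁ c₂ := by
    have h1 : c₁ * (b - a) ≤ ∫ x in a..b, u x := by
      calc c₁ * (b - a) = ∫ _x in a..b, c₁ := by
            rw [intervalIntegral.integral_const, smul_eq_mul]; ring
        _ ≤ _ := intervalIntegral.integral_mono_on hab.le intervalIntegrable_const hint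
            (fun x _ => (hb x).1)
    have h2 : (∫ x in a..b, u x) ≤ c₂ * (b - a) := by
      calc (∫ x in a..b, u x) ≤ ∫ _x in a..b, c₂ :=
            intervalIntegral.integral_mono_on hab.le hint intervalIntegrable_const
              (fun x _ => (hb x).2)
        _ = c₂ * (b - a) := by rw [intervalIntegral.integral_const, smul_eq_mul]; ring
    rw [hm, intervalAvg, smul_eq_mul]
    constructor
    · rw [inv_mul_eq_div, le_div_iff₀ hba]; linarith
    · rw [inv_mul_eq_div, div_le_iff₀ hba]; linarith
  have hptw : ∀ x, ‖u x - m‖ ≤ c₂ - c₁ := fun x => by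
    rw [Real.norm_eq_abs]
    exact abs_le.2 ⟨by linarith [(hb x).1, him.2], by linarith [(hb x).2, him.1]⟩
  have hJ : (∫ x in a..b, ‖u x - m‖) ≤ (c₂ - c₁) * (b - a) := by
    calc (∫ x in a..b, ‖u x - m‖) ≤ ∫ _x in a..b, (c₂ - c₁) :=
          intervalIntegral.integral_mono_on hab.le
            ((hint.sub intervalIntegrable_const).norm) intervalIntegrable_const
            (fun x _ => hptw x)
      _ = (c₂ - c₁) * (b - a) := by rw [intervalIntegral.integral_const, smul_eq_mul]; ring
  rw [inv_mul_eq_div, div_le_iff₀ hba]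
  linarith

lemma integral_Ioc_const_of_eqOn {u : ℝ → ℝ} {α γ c : ℝ} (hαγ : α ≤ γ)
    (h : ∀ x ∈ Set.Ioc α γ, u x = c) :
    IntervalIntegrable u volume α γ ∧ (∫ x in α..γ, u x) = c * (γ - α) := by
  constructor
  · rw [intervalIntegrable_iff_integrableOn_Ioc_of_le hαγ]
    apply (integrableOn_const measure_Ioc_lt_top.ne).congr_fun_ae (f := fun _ => c) ?_
    exact (ae_restrict_iff' measurableSet_Ioc).2 (ae_of_all _ fun x hx => (h x hx).symm)
  · rw [intervalIntegral.integral_congr_ae (g := fun _ => c) ?_,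
      intervalIntegral.integral_const, smul_eq_mul]
    · ring
    · rw [Set.uIoc_of_le hαγ]
      exact ae_of_all _ h

lemma bmo_two_step {u : ℝ → ℝ} {α β γ c₁ c₂ : ℝ} (hαβ : α < β) (hγ : γ = (α + β)/2)
    (h₁ : ∀ x ∈ Set.Ioc α γ, u x = c₁) (h₂ : ∀ x ∈ Set.Ioc γ β, u x = c₂) :
    ENNReal.ofReal (|c₁ - c₂| / 2) ≤ bmoSeminorm u := by
  have hαγ : α < γ := by rw [hγ]; linarith
  have hγβ : γ < β := by rw [hγ]; linarith
  have hL : γ - α = (β - α)/2 := by rw [hγ]; ring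
  have hL' : β - γ = (β - α)/2 := by rw [hγ]; ring
  have hba : (0:ℝ) < β - α := by linarith
  obtain ⟨int1, e1⟩ := integral_Ioc_const_of_eqOn hαγ.le h₁
  obtain ⟨int2, e2⟩ := integral_Ioc_const_of_eqOn hγβ.le h₂
  have etot : (∫ x in α..β, u x) = (c₁ + c₂) * ((β - α)/2) := by
    rw [← intervalIntegral.integral_add_adjacent_intervals int1 int2, e1, e2, hL, hL']
    ring
  have hmval : intervalAvg u α β = (c₁ + c₂)/2 := by
    rw [intervalAvg, smul_eq_mul, etot]
    field_simp
  have habs1 : ∀ x ∈ Set.Ioc α γ, ‖u x - intervalAvg u α β‖ = |c₁ - c₂|/2 := by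
    intro x hx
    rw [hmval, h₁ x hx, Real.norm_eq_abs, show c₁ - (c₁ + c₂)/2 = (c₁ - c₂)/2 by ring,
      abs_div, abs_two]
  have habs2 : ∀ x ∈ Set.Ioc γ β, ‖u x - intervalAvg u α β‖ = |c₁ - c₂|/2 := by
    intro x hx
    rw [hmval, h₂ x hx, Real.norm_eq_abs, show c₂ - (c₁ + c₂)/2 = -((c₁ - c₂)/2) by ring,
      abs_neg, abs_div, abs_two]
  obtain ⟨int1', e1'⟩ := integral_Ioc_const_of_eqOn hαγ.le habs1
  obtain ⟨int2', e2'⟩ := integral_Ioc_const_of_eqOn hγβ.le habs2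
  have etot' : (∫ x in α..β, ‖u x - intervalAvg u α β‖) = |c₁ - c₂|/2 * (β - α) := by
    rw [← intervalIntegral.integral_add_adjacent_intervals int1' int2', e1', e2', hL, hL']
    ring
  have key : (β - α)⁻¹ * ∫ x in α..β, ‖u x - intervalAvg u α β‖ = |c₁ - c₂|/2 := by
    rw [etot', inv_mul_eq_div, mul_div_assoc, div_self hba.ne', mul_one]
  calc ENNReal.ofReal (|c₁ - c₂| / 2)
      = ENNReal.ofReal ((β - α)⁻¹ * ∫ x in α..β, ‖u x - intervalAvg u α β‖) := by rw [key]
    _ ≤ bmoSeminorm u :=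
      le_iSup_of_le α (le_iSup_of_le β (le_iSup_of_le hαβ le_rfl))

lemma comp_eq {h A : ℝ} (hh0 : 0 < h) (hh : h ≤ 1/2) (x : ℝ) :
    PL 4 (5+h) 6 (A/(1+h)) (1/(1-h)) (PL 4 5 6 (1+h) (1-h) x) = PL 4 5 6 A 1 x := by
  have h1p : (0:ℝ) < 1 + h := by linarith
  have h1m : (0:ℝ) < 1 - h := by linarith
  rcases le_total x 4 with h4 | h4
  · have hℓ : PL 4 5 6 (1+h) (1-h) x = x := PL_left (by norm_num) (by norm_num) h4
    rw [hℓ, PL_left (by linarith) (by linarith) h4, PL_left (by norm_num) (by norm_num) h4]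
  · rcases le_total x 5 with h5 | h5
    · have hℓ : PL 4 5 6 (1+h) (1-h) x = 4 + (1+h)*(x-4) := by
        unfold PL
        rw [ramp_of_mem h4 h5, ramp_of_le (by norm_num) h5]
        ring
      rw [hℓ]
      unfold PL
      rw [ramp_of_mem (A := 4) (B := 5+h) (by nlinarith) (by nlinarith),
        ramp_of_le (A := 5+h) (B := 6) (by linarith) (by nlinarith),
        ramp_of_mem h4 h5, ramp_of_le (by norm_num) h5]
      field_simp
      ring
    · rcases le_total x 6 with h6 | h6
      · have hℓ : PL 4 5 6 (1+h) (1-h) x = x + h - h*(x-5) := by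
          unfold PL
          rw [ramp_of_ge (by norm_num) h5, ramp_of_mem h5 h6]
          ring
        rw [hℓ]
        unfold PL
        rw [ramp_of_ge (A := 4) (B := 5+h) (by linarith) (by nlinarith),
          ramp_of_mem (A := 5+h) (B := 6) (by nlinarith) (by nlinarith),
          ramp_of_ge (by norm_num) h5, ramp_of_mem h5 h6]
        field_simp
        ring
      · have hℓ : PL 4 5 6 (1+h) (1-h) x = x := by
          unfold PL
          rw [ramp_of_ge (by norm_num) (by linarith), ramp_of_ge (by norm_num) h6]
          ring
        rw [hℓ]
        unfold PL
        rw [ramp_of_ge (A := 4) (B := 5+h) (by linarith) (by linarith),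
          ramp_of_ge (A := 5+h) (B := 6) (by linarith) h6,
          ramp_of_ge (by norm_num) (by linarith), ramp_of_ge (by norm_num) h6]
        field_simp
        ring

lemma log_bounds {h : ℝ} (h0 : 0 < h) (h12 : h ≤ 1/2) :
    Real.log (1+h) ≤ h ∧ -Real.log (1-h) ≤ 2*h := by
  have h1m : (0:ℝ) < 1 - h := by linarith
  constructor
  · have := Real.log_le_sub_one_of_pos (show (0:ℝ) < 1 + h by linarith)
    linarith
  · have hinv := Real.log_le_sub_one_of_pos (show (0:ℝ) < (1-h)⁻¹ by positivity)
    rw [Real.log_inv] at hinv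
    have hle : (1-h)⁻¹ ≤ 1 + 2*h := by
      rw [inv_le_iff_one_le_mul₀ h1m]
      nlinarith
    linarith

end SQSHelpers

/-- discontinuity of right translation: there are `f` with arbitrarily
small `0 < ‖log f'‖_*` and `ℓ_n → id` in `SQS` such that `log (f∘ℓ_n⁻¹)'` stays at
BMO-distance `≥ c` from `log f'`; hence `SQS` is not a topological group. -/
theorem statement12 :
    ∀ ε > (0:ℝ), ∃ f f' : ℝ → ℝ,
      IsSQSWith f f' ∧ f 0 = 0 ∧ f 1 = 1 ∧
      0 < bmoSeminorm (fun x => Real.log (f' x)) ∧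
      bmoSeminorm (fun x => Real.log (f' x)) < ENNReal.ofReal ε ∧
      ∃ ℓ ℓd : ℕ → ℝ → ℝ,
        (∀ n, IsSQSWith (ℓ n) (ℓd n) ∧ ℓ n 0 = 0 ∧ ℓ n 1 = 1) ∧
        Filter.Tendsto (fun n => bmoSeminorm (fun x => Real.log (ℓd n x)))
          Filter.atTop (nhds 0) ∧
        ∃ c > (0:ℝ), ∃ g : ℕ → ℝ → ℝ,
          ∀ n, IsLocAC (fun x => f (Function.invFun (ℓ n) x)) (g n) ∧
            ENNReal.ofReal c
              ≤ bmoSeminorm (fun x => Real.log (g n x) - Real.log (f' x)) := by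
  intro ε hε
  set a : ℝ := min ε 1 / 2 with ha_def
  have hmin : 0 < min ε 1 := lt_min hε one_pos
  have ha0 : 0 < a := by rw [ha_def]; positivity
  have ha1 : a ≤ 1/2 := by
    have : min ε 1 ≤ 1 := min_le_right _ _
    rw [ha_def]; linarith
  have haε : a < ε := by
    have h1 : min ε 1 ≤ ε := min_le_left _ _
    rw [ha_def]; linarith
  set A : ℝ := Real.exp a with hA_def
  have hA1 : 1 ≤ A := Real.one_le_exp ha0.le
  have hA0 : 0 < A := Real.exp_pos a
  have hlogA : Real.log A = a := Real.log_exp a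
  set hs : ℕ → ℝ := fun n => a / 8 * (1 / ((n : ℝ) + 1)) with hs_def
  have hs0 : ∀ n, 0 < hs n := fun n => by
    have : (0:ℝ) < (n : ℝ) + 1 := by positivity
    rw [hs_def]; positivity
  have hs8 : ∀ n, hs n ≤ a / 8 := fun n => by
    have hn1 : (1:ℝ) / ((n : ℝ) + 1) ≤ 1 := by
      rw [div_le_one (by positivity)]
      linarith [Nat.cast_nonneg (α := ℝ) n]
    have := hs0 n
    rw [hs_def]
    nlinarith
  have hs12 : ∀ n, hs n ≤ 1/2 := fun n => le_trans (hs8 n) (by linarith)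
  have hs116 : ∀ n, hs n ≤ 1/16 := fun n => le_trans (hs8 n) (by linarith)
  -- values of the derivative of f
  have hf'on1 : ∀ x ∈ Set.Ioc (4:ℝ) 5, PL' 4 5 6 A 1 x = A := by
    intro x hx
    have h2 : x ∉ Set.Ioc (5:ℝ) 6 := fun hc => absurd hc.1 (not_lt.2 hx.2)
    simp [PL', Set.indicator_of_mem hx, Set.indicator_of_notMem h2]
  have hf'not : ∀ x, x ∉ Set.Ioc (4:ℝ) 5 → PL' 4 5 6 A 1 x = 1 := by
    intro x hx
    simp [PL', Set.indicator_of_notMem hx]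
  have hf'meas : Measurable (PL' 4 5 6 A 1) := PL'_measurable _ _ _ _ _
  have hlogvals : ∀ x, Real.log (PL' 4 5 6 A 1 x) ∈ Set.Icc 0 a := by
    intro x
    rcases PL'_cases (by norm_num : (4:ℝ) < 5) x with hc | hc | hc
    · rw [hc, Real.log_one]; exact ⟨le_rfl, ha0.le⟩
    · rw [hc, hlogA]; exact ⟨ha0.le, le_rfl⟩
    · rw [hc, Real.log_one]; exact ⟨le_rfl, ha0.le⟩
  refine ⟨PL 4 5 6 A 1, PL' 4 5 6 A 1, ?_, ?_, ?_, ?_, ?_, ?_⟩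
  · -- IsSQSWith f f'
    refine ⟨PL_strictMono (by norm_num) (by norm_num) hA0 one_pos,
      PL_surjective (by norm_num) (by norm_num),
      ⟨locInt_of_bounded hf'meas (PL'_abs_le (by norm_num)),
        fun p q hpq => PL_FTC (by norm_num) (by norm_num) p q hpq.le⟩,
      isAInfty_of_bounds hf'meas one_pos le_rfl hA1 ?_⟩
    intro x
    rcases PL'_cases (by norm_num : (4:ℝ) < 5) x with hc | hc | hc
    · rw [hc]; exact ⟨le_rfl, hA1⟩
    · rw [hc]; exact ⟨hA1, le_rfl⟩
    · rw [hc]; exact ⟨le_rfl, hA1⟩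
  · exact PL_left (by norm_num) (by norm_num) (by norm_num)
  · exact PL_left (by norm_num) (by norm_num) (by norm_num)
  · -- 0 < bmo (log f')
    have hlb := bmo_two_step (u := fun x => Real.log (PL' 4 5 6 A 1 x))
      (α := 4) (β := 6) (γ := 5) (c₁ := a) (c₂ := 0)
      (by norm_num) (by norm_num)
      (fun x hx => by
        show Real.log (PL' 4 5 6 A 1 x) = a
        rw [hf'on1 x hx, hlogA])
      (fun x hx => by
        have hni : x ∉ Set.Ioc (4:ℝ) 5 := fun hc => absurd hx.1 (not_lt.2 hc.2)
        show Real.log (PL' 4 5 6 A 1 x) = 0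
        rw [hf'not x hni, Real.log_one])
    refine lt_of_lt_of_le ?_ hlb
    rw [sub_zero, abs_of_nonneg ha0.le]
    exact ENNReal.ofReal_pos.2 (by positivity)
  · -- bmo (log f') < ε
    refine lt_of_le_of_lt (bmo_le_of_bounds (Real.measurable_log.comp hf'meas) hlogvals) ?_
    rw [sub_zero]
    exact (ENNReal.ofReal_lt_ofReal_iff hε).2 haε
  · -- the sequence ℓ_n
    refine ⟨fun n => PL 4 5 6 (1 + hs n) (1 - hs n),
      fun n => PL' 4 5 6 (1 + hs n) (1 - hs n), ?_, ?_, ?_⟩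
    · intro n
      have hp : (0:ℝ) < 1 + hs n := by linarith [hs0 n]
      have hm : (0:ℝ) < 1 - hs n := by linarith [hs12 n]
      refine ⟨⟨PL_strictMono (by norm_num) (by norm_num) hp hm,
        PL_surjective (by norm_num) (by norm_num),
        ⟨locInt_of_bounded (PL'_measurable _ _ _ _ _) (PL'_abs_le (by norm_num)),
          fun p q hpq => PL_FTC (by norm_num) (by norm_num) p q hpq.le⟩,
        isAInfty_of_bounds (PL'_measurable _ _ _ _ _) (m := 1 - hs n) (K := 1 + hs n)
          hm (by linarith [hs0 n]) (by linarith [hs0 n]) ?_⟩,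
        PL_left (by norm_num) (by norm_num) (by norm_num),
        PL_left (by norm_num) (by norm_num) (by norm_num)⟩
      intro x
      show PL' 4 5 6 (1 + hs n) (1 - hs n) x ∈ Set.Icc (1 - hs n) (1 + hs n)
      rcases PL'_cases (by norm_num : (4:ℝ) < 5) x with hc | hc | hc
      · rw [hc]; exact ⟨by linarith [hs0 n], by linarith [hs0 n]⟩
      · rw [hc]; exact ⟨by linarith [hs0 n], le_rfl⟩
      · rw [hc]; exact ⟨le_rfl, by linarith [hs0 n]⟩
    · -- tendsto
      have hbound : ∀ n, bmoSeminorm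
          (fun x => Real.log (PL' 4 5 6 (1 + hs n) (1 - hs n) x))
            ≤ ENNReal.ofReal (3 * hs n) := by
        intro n
        have hlogb := log_bounds (hs0 n) (hs12 n)
        have hm' : Real.log (1 - hs n) ≤ 0 :=
          Real.log_nonpos (by linarith [hs12 n]) (by linarith [hs0 n])
        have hp' : 0 ≤ Real.log (1 + hs n) := Real.log_nonneg (by linarith [hs0 n])
        have hvals : ∀ x, Real.log (PL' 4 5 6 (1 + hs n) (1 - hs n) x)
            ∈ Set.Icc (Real.log (1 - hs n)) (Real.log (1 + hs n)) := by
          intro x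
          rcases PL'_cases (by norm_num : (4:ℝ) < 5) x with hc | hc | hc
          · rw [hc, Real.log_one]; exact ⟨hm', hp'⟩
          · rw [hc]; exact ⟨hm'.trans hp', le_rfl⟩
          · rw [hc]; exact ⟨le_rfl, hm'.trans hp'⟩
        refine le_trans (bmo_le_of_bounds
          (Real.measurable_log.comp (PL'_measurable _ _ _ _ _)) hvals) ?_
        exact ENNReal.ofReal_le_ofReal (by linarith [hlogb.1, hlogb.2])
      have ht : Tendsto (fun n : ℕ => 3 * hs n) atTop (nhds 0) := by
        have h2 := tendsto_one_div_add_atTop_nhds_zero_nat.const_mul (3 * (a/8))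
        rw [mul_zero] at h2
        exact h2.congr (fun n => by rw [hs_def]; ring)
      have ht' : Tendsto (fun n : ℕ => ENNReal.ofReal (3 * hs n)) atTop (nhds 0) := by
        have := ENNReal.tendsto_ofReal ht
        rwa [ENNReal.ofReal_zero] at this
      exact tendsto_of_tendsto_of_tendsto_of_le_of_le tendsto_const_nhds ht'
        (fun n => zero_le) hbound
    · -- the constant c and the derivatives g n
      refine ⟨a/4, by positivity,
        fun n => PL' 4 (5 + hs n) 6 (A/(1 + hs n)) (1/(1 - hs n)), fun n => ?_⟩
      have hp : (0:ℝ) < 1 + hs n := by linarith [hs0 n]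
      have hm : (0:ℝ) < 1 - hs n := by linarith [hs12 n]
      have h16 := hs116 n
      have h0 := hs0 n
      constructor
      · -- IsLocAC
        have hsurj : Function.Surjective (PL 4 5 6 (1 + hs n) (1 - hs n)) :=
          PL_surjective (by norm_num) (by norm_num)
        have hfn : (fun x => PL 4 5 6 A 1
            (Function.invFun (PL 4 5 6 (1 + hs n) (1 - hs n)) x))
              = PL 4 (5 + hs n) 6 (A/(1 + hs n)) (1/(1 - hs n)) := by
          funext y
          have hy : PL 4 5 6 (1 + hs n) (1 - hs n)
              (Function.invFun (PL 4 5 6 (1 + hs n) (1 - hs n)) y) = y :=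
            Function.rightInverse_invFun hsurj y
          conv_lhs => rw [← comp_eq (hs0 n) (hs12 n)
            (Function.invFun (PL 4 5 6 (1 + hs n) (1 - hs n)) y)]
          rw [hy]
        rw [hfn]
        exact ⟨locInt_of_bounded (PL'_measurable _ _ _ _ _) (PL'_abs_le (by linarith)),
          fun p q hpq => PL_FTC (by linarith) (by linarith) p q hpq.le⟩
      · -- BMO lower bound
        have hgon1 : ∀ x ∈ Set.Ioc (5:ℝ) (5 + hs n),
            PL' 4 (5 + hs n) 6 (A/(1 + hs n)) (1/(1 - hs n)) x = A/(1 + hs n) := by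
          intro x hx
          have mem1 : x ∈ Set.Ioc (4:ℝ) (5 + hs n) := ⟨by linarith [hx.1], hx.2⟩
          have not2 : x ∉ Set.Ioc (5 + hs n) 6 := fun hc => absurd hc.1 (not_lt.2 hx.2)
          simp [PL', Set.indicator_of_mem mem1, Set.indicator_of_notMem not2]
        have hgon2 : ∀ x ∈ Set.Ioc (5 + hs n) (5 + 2*hs n),
            PL' 4 (5 + hs n) 6 (A/(1 + hs n)) (1/(1 - hs n)) x = 1/(1 - hs n) := by
          intro x hx
          have not1 : x ∉ Set.Ioc (4:ℝ) (5 + hs n) := fun hc => absurd hx.1 (not_lt.2 hc.2)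
          have mem2 : x ∈ Set.Ioc (5 + hs n) 6 := ⟨hx.1, by linarith [hx.2]⟩
          simp [PL', Set.indicator_of_mem mem2, Set.indicator_of_notMem not1]
        have hf'one : ∀ x, 5 < x → PL' 4 5 6 A 1 x = 1 := fun x hx =>
          hf'not x (fun hc => absurd hx (not_lt.2 hc.2))
        have hlogb := log_bounds (hs0 n) (hs12 n)
        have hstep := bmo_two_step
          (u := fun x => Real.log (PL' 4 (5 + hs n) 6 (A/(1 + hs n)) (1/(1 - hs n)) x)
            - Real.log (PL' 4 5 6 A 1 x))
          (α := 5) (β := 5 + 2*hs n) (γ := 5 + hs n)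
          (c₁ := a - Real.log (1 + hs n)) (c₂ := -Real.log (1 - hs n))
          (by linarith) (by ring)
          (fun x hx => by
            show Real.log (PL' 4 (5 + hs n) 6 (A/(1 + hs n)) (1/(1 - hs n)) x)
              - Real.log (PL' 4 5 6 A 1 x) = a - Real.log (1 + hs n)
            rw [hgon1 x hx, hf'one x hx.1, Real.log_one, sub_zero,
              Real.log_div hA0.ne' hp.ne', hlogA])
          (fun x hx => by
            show Real.log (PL' 4 (5 + hs n) 6 (A/(1 + hs n)) (1/(1 - hs n)) x)
              - Real.log (PL' 4 5 6 A 1 x) = -Real.log (1 - hs n)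
            rw [hgon2 x hx, hf'one x (by linarith [hx.1]), Real.log_one, sub_zero,
              one_div, Real.log_inv])
        refine le_trans ?_ hstep
        apply ENNReal.ofReal_le_ofReal
        have h8 := hs8 n
        have hd : a/2 ≤ (a - Real.log (1 + hs n)) - (-Real.log (1 - hs n)) := by
          linarith [hlogb.1, hlogb.2]
        have := le_abs_self ((a - Real.log (1 + hs n)) - (-Real.log (1 - hs n)))
        linarith
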